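/- Let h : ℝⁿ → ℝⁿ be a C¹ diffeomorphism such that at every point its Jacobian matrix H(x) has, in each row, exactly one non-zero entry, and the position of this non-zero entry in each row is constant in x. Then h is a permuted component-wise transformation: there is a permutation π of {1,...,n} and strictly monotone C¹ functions h₁,...,hₙ : ℝ → ℝ with h(x)ᵢ = hᵢ(x_{π(i)}). -/

import Mathlib

/-- If `h : ℝⁿ → ℝⁿ` is a `C¹` diffeomorphism whose Jacobian has, in each row
`i`, exactly one non-zero entry, located at a column `σ i` that does not depend
on the point, then `h` is a permuted component-wise transformation: there are a
permutation `π` and strictly monotone `C¹` functions `hᵢ : ℝ → ℝ` with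
`h(x)ᵢ = hᵢ(x_{π i})`. -/
theorem diffeo_with_row_sparse_jacobian_is_permuted_componentwise
    {n : ℕ} (h : (Fin n → ℝ) → Fin n → ℝ)
    (hbij : Function.Bijective h)
    (hC1 : ContDiff ℝ 1 h)
    (hinvC1 : ContDiff ℝ 1 (Function.invFun h))
    (σ : Fin n → Fin n)
    (hjac : ∀ (x : Fin n → ℝ) (i j : Fin n),
      fderiv ℝ h x (Pi.single j 1) i ≠ 0 ↔ j = σ i) :
    ∃ (π : Equiv.Perm (Fin n)) (h' : Fin n → ℝ → ℝ),
      (∀ i, StrictMono (h' i) ∨ StrictAnti (h' i)) ∧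
      (∀ i, ContDiff ℝ 1 (h' i)) ∧
      ∀ (x : Fin n → ℝ) (i : Fin n), h x i = h' i (x (π i)) := by
  have hdiff : Differentiable ℝ h := hC1.differentiable one_ne_zero
  -- derivative of a component applied to an arbitrary vector
  have hfd : ∀ (z v : Fin n → ℝ) (i : Fin n),
      fderiv ℝ h z v i = (v (σ i)) * fderiv ℝ h z (Pi.single (σ i) 1) i := by
    intro z v i
    have hv : v = ∑ j, Pi.single j (v j) := (Finset.univ_sum_single v).symm
    calc fderiv ℝ h z v i = (∑ j, fderiv ℝ h z (Pi.single j (v j))) i := by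
          rw [← map_sum, ← hv]
      _ = ∑ j, fderiv ℝ h z (Pi.single j (v j)) i := by
          simp [Finset.sum_apply]
      _ = ∑ j, (v j) * fderiv ℝ h z (Pi.single j 1) i := by
          refine Finset.sum_congr rfl fun j _ => ?_
          have hs : (Pi.single j (v j) : Fin n → ℝ) = (v j) • (Pi.single j 1 : Fin n → ℝ) := by
            funext k
            by_cases hk : k = j <;> simp [Pi.single_apply, hk]
          rw [hs, map_smul]
          simp
      _ = (v (σ i)) * fderiv ℝ h z (Pi.single (σ i) 1) i := by
          refine Finset.sum_eq_single (σ i) (fun j _ hj => ?_) (by simp)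
          have : fderiv ℝ h z (Pi.single j 1) i = 0 := by
            by_contra hne; exact hj ((hjac z i j).mp hne)
          rw [this, mul_zero]
  -- component i of h depends only on coordinate σ i
  have hdep : ∀ (i : Fin n) (x y : Fin n → ℝ), x (σ i) = y (σ i) → h x i = h y i := by
    intro i x y hxy
    set φ : ℝ → ℝ := fun t => h (x + t • (y - x)) i with hφ
    have hline : ∀ t : ℝ, HasDerivAt φ 0 t := by
      intro t
      have h1 : HasDerivAt (fun t : ℝ => x + t • (y - x)) (y - x) t := by
        simpa using ((hasDerivAt_id t).smul_const (y - x)).const_add x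
      have h2 : HasFDerivAt h (fderiv ℝ h (x + t • (y - x))) (x + t • (y - x)) :=
        (hdiff _).hasFDerivAt
      have h3 : HasDerivAt (fun t : ℝ => h (x + t • (y - x)))
          (fderiv ℝ h (x + t • (y - x)) (y - x)) t := h2.comp_hasDerivAt t h1
      have h4 : HasDerivAt φ (fderiv ℝ h (x + t • (y - x)) (y - x) i) t :=
        (ContinuousLinearMap.proj i :
          (Fin n → ℝ) →L[ℝ] ℝ).hasFDerivAt.comp_hasDerivAt t h3
      have h5 : fderiv ℝ h (x + t • (y - x)) (y - x) i = 0 := by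
        rw [hfd]
        have : (y - x) (σ i) = 0 := by simp [Pi.sub_apply, hxy]
        rw [this, zero_mul]
      rwa [h5] at h4
    have hconst : φ 1 = φ 0 :=
      is_const_of_deriv_eq_zero (fun t => (hline t).differentiableAt)
        (fun t => (hline t).deriv) 1 0
    have e0 : φ 0 = h x i := by simp [hφ]
    have e1 : φ 1 = h y i := by simp [hφ]
    rw [← e0, ← e1, hconst]
  -- σ is injective, hence bijective
  have hσinj : Function.Injective σ := by
    by_contra hni
    have hns : ¬ Function.Surjective σ := fun hs =>
      hni (Finite.injective_iff_surjective.mpr hs)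
    rw [Function.Surjective] at hns
    push_neg at hns
    obtain ⟨j, hj⟩ := hns
    have : h (Pi.single j 1) = h 0 := by
      funext i
      apply hdep
      simp [Pi.single_apply, hj i]
    have := hbij.injective this
    have := congrFun this j
    simp at this
  let π : Equiv.Perm (Fin n) := Equiv.ofBijective σ (Finite.injective_iff_bijective.mp hσinj)
  set h' : Fin n → ℝ → ℝ := fun i t => h (Pi.single (σ i) t) i with hh'
  -- the key representation
  have hrep : ∀ (x : Fin n → ℝ) (i : Fin n), h x i = h' i (x (σ i)) := by
    intro x i
    exact hdep i x (Pi.single (σ i) (x (σ i))) (by simp)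
  -- derivative of h' i
  have hder : ∀ (i : Fin n) (t : ℝ),
      HasDerivAt (h' i) (fderiv ℝ h (Pi.single (σ i) t) (Pi.single (σ i) 1) i) t := by
    intro i t
    have h1 : HasDerivAt (fun t : ℝ => (Pi.single (σ i) t : Fin n → ℝ))
        (Pi.single (σ i) 1) t := by
      have H := (hasFDerivAt_single (𝕜 := ℝ) (E := fun _ : Fin n => ℝ) (i := σ i)
        (y := t)).hasDerivAt
      have hv : (ContinuousLinearMap.pi (Pi.single (σ i) (ContinuousLinearMap.id ℝ ℝ)) :
          ℝ →L[ℝ] (Fin n → ℝ)) 1 = Pi.single (σ i) 1 := by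
        funext k
        by_cases hk : k = σ i <;>
          simp [ContinuousLinearMap.pi_apply, Pi.single_apply, hk]
      exact hv ▸ H
    have h3 := (hdiff _).hasFDerivAt.comp_hasDerivAt t h1
    exact (ContinuousLinearMap.proj i :
      (Fin n → ℝ) →L[ℝ] ℝ).hasFDerivAt.comp_hasDerivAt t h3
  have hdne : ∀ (i : Fin n) (t : ℝ), deriv (h' i) t ≠ 0 := by
    intro i t
    rw [(hder i t).deriv]
    exact (hjac _ i (σ i)).mpr rfl
  have hC1' : ∀ i, ContDiff ℝ 1 (h' i) := by
    intro i
    have hs : ContDiff ℝ 1 (fun t : ℝ => (Pi.single (σ i) t : Fin n → ℝ)) := by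
      apply contDiff_pi.mpr
      intro j
      by_cases hj : j = σ i
      · subst hj; simpa [Pi.single_apply] using contDiff_fun_id
      · simpa [Pi.single_apply, hj] using contDiff_const
    exact ((ContinuousLinearMap.proj i :
      (Fin n → ℝ) →L[ℝ] ℝ).contDiff.comp hC1).comp hs
  -- constant sign of derivative ⇒ strict monotone or antitone
  have hmono : ∀ i, StrictMono (h' i) ∨ StrictAnti (h' i) := by
    intro i
    have hcont : Continuous (deriv (h' i)) :=
      ((hC1' i).continuous_deriv le_rfl)
    have hsign : (∀ t, 0 < deriv (h' i) t) ∨ (∀ t, deriv (h' i) t < 0) := by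
      by_cases hp : 0 < deriv (h' i) 0
      · left
        intro t
        by_contra hle
        push_neg at hle
        have hlt : deriv (h' i) t < 0 := lt_of_le_of_ne hle (hdne i t)
        obtain ⟨s, _, hs⟩ := intermediate_value_uIcc (a := t) (b := 0)
          (hcont.continuousOn (s := Set.uIcc t 0)) (show (0:ℝ) ∈ Set.uIcc _ _ from
            Set.mem_uIcc.mpr (Or.inl ⟨hlt.le, hp.le⟩))
        exact hdne i s hs
      · right
        intro t
        have hn : deriv (h' i) 0 < 0 :=
          lt_of_le_of_ne (not_lt.mp hp) (hdne i 0)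
        by_contra hle
        push_neg at hle
        have hlt : 0 < deriv (h' i) t := lt_of_le_of_ne hle (Ne.symm (hdne i t))
        obtain ⟨s, _, hs⟩ := intermediate_value_uIcc (a := 0) (b := t)
          (hcont.continuousOn (s := Set.uIcc 0 t)) (show (0:ℝ) ∈ Set.uIcc _ _ from
            Set.mem_uIcc.mpr (Or.inl ⟨hn.le, hlt.le⟩))
        exact hdne i s hs
    rcases hsign with hs | hs
    · exact Or.inl (strictMono_of_deriv_pos hs)
    · exact Or.inr (strictAnti_of_deriv_neg hs)
  refine ⟨π, h', hmono, hC1', fun x i => ?_⟩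
  have : π i = σ i := rfl
  rw [this]
  exact hrep x i
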